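/- Let T be a tree of diameter at least 4, let P = u_1u_2…u_t be a longest path in T, and let T' be obtained from T by subdividing the edges u_2u_3 and u_3u_4. Then γ_sp(T') ≥ γ_sp(T) + 1. -/

import Mathlib

open SimpleGraph

/-- `S` is a super dominating set of `G`: every vertex `u ∉ S` has some `v ∈ S`
with `N(v) ∩ Sᶜ = {u}`. -/
def SuperDomSet {V : Type} (G : SimpleGraph V) (S : Set V) : Prop :=
  ∀ u ∈ Sᶜ, ∃ v ∈ S, G.neighborSet v ∩ Sᶜ = {u}

/-- The super domination number `γ_sp(G)`. -/
noncomputable def superDomNum {V : Type} (G : SimpleGraph V) : ℕ :=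
  sInf {n | ∃ S : Set V, SuperDomSet G S ∧ S.ncard = n}

/-- `S` is a dominating set of `G`. -/
def DomSet {V : Type} (G : SimpleGraph V) (S : Set V) : Prop :=
  ∀ u ∉ S, ∃ v ∈ S, G.Adj v u

/-- The domination number `γ(G)`. -/
noncomputable def domNum {V : Type} (G : SimpleGraph V) : ℕ :=
  sInf {n | ∃ S : Set V, DomSet G S ∧ S.ncard = n}

/-- `S` is a total dominating set of `G`: every vertex has a neighbor in `S`. -/
def TotalDomSet {V : Type} (G : SimpleGraph V) (S : Set V) : Prop :=
  ∀ u : V, ∃ v ∈ S, G.Adj v u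

/-- The total domination number `γ_t(G)`. -/
noncomputable def totalDomNum {V : Type} (G : SimpleGraph V) : ℕ :=
  sInf {n | ∃ S : Set V, TotalDomSet G S ∧ S.ncard = n}

/-- A leaf is a vertex of degree 1. -/
def IsLeaf {V : Type} (G : SimpleGraph V) (v : V) : Prop :=
  (G.neighborSet v).ncard = 1

/-- A support vertex is a vertex adjacent to a leaf. -/
def IsSupport {V : Type} (G : SimpleGraph V) (v : V) : Prop :=
  ∃ u, G.Adj v u ∧ IsLeaf G u

/-- The graph obtained from `G` by subdividing each edge in `F` once: for `e ∈ F`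
the edge is removed and replaced by a path of length 2 through the new vertex `e`. -/
def subdivide {V : Type} (G : SimpleGraph V) (F : Set (Sym2 V)) :
    SimpleGraph (V ⊕ F) where
  Adj x y :=
    match x, y with
    | Sum.inl a, Sum.inl b => G.Adj a b ∧ s(a, b) ∉ F
    | Sum.inl a, Sum.inr e => a ∈ (e : Sym2 V)
    | Sum.inr e, Sum.inl a => a ∈ (e : Sym2 V)
    | Sum.inr _, Sum.inr _ => False
  symm := by
    constructor
    rintro (a | e) (b | f) h
    · exact ⟨h.1.symm, by rw [Sym2.eq_swap]; exact h.2⟩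
    · exact h
    · exact h
    · exact h
  loopless := by
    constructor
    rintro (a | e) h
    · exact G.loopless.irrefl a h.1
    · exact h

open Sum Walk

lemma tri_free {T : SimpleGraph V} (hT : T.IsTree) :
    ∀ a b c : V, T.Adj a b → T.Adj b c → T.Adj a c → False := by
  intro a b c hab hbc hac
  obtain ⟨r, -, hr⟩ := hT.existsUnique_path a c
  have h1 : (Walk.cons hab (Walk.cons hbc Walk.nil)) = r := by
    apply hr
    simp [Walk.isPath_def, hab.ne, hac.ne, hbc.ne]
  have h2 : (Walk.cons hac Walk.nil) = r := by
    apply hr; simp [Walk.isPath_def, hac.ne]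
  have := congrArg Walk.length (h1.trans h2.symm)
  simp at this

lemma two_path_unique {T : SimpleGraph V} (hT : T.IsTree) :
    ∀ a b b' c : V, T.Adj a b → T.Adj b c → T.Adj a b' → T.Adj b' c → a ≠ c → b = b' := by
  intro a b b' c hab hbc hab' hb'c hac
  obtain ⟨r, -, hr⟩ := hT.existsUnique_path a c
  have h1 : (Walk.cons hab (Walk.cons hbc Walk.nil)) = r := by
    apply hr; simp [Walk.isPath_def, hab.ne, hac, hbc.ne]
  have h2 : (Walk.cons hab' (Walk.cons hb'c Walk.nil)) = r := by
    apply hr; simp [Walk.isPath_def, hab'.ne, hac, hb'c.ne]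
  have := congrArg Walk.support (h1.trans h2.symm)
  simp at this
  exact this

lemma longest_path_facts {T : SimpleGraph V} (hT : T.IsTree) {a b : V} (p : T.Walk a b)
    (hp : p.IsPath) (hlong : ∀ {c d : V} (q : T.Walk c d), q.IsPath → q.length ≤ p.length)
    (hdiam : 4 ≤ p.length) :
    p.getVert 0 ≠ p.getVert 2 ∧ p.getVert 0 ≠ p.getVert 3 ∧ p.getVert 1 ≠ p.getVert 3 ∧
    (∀ w, T.Adj (p.getVert 1) w → w ≠ p.getVert 2 → ∀ c, T.Adj w c ↔ c = p.getVert 1) := by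
  classical
  cases p with
  | nil => simp at hdiam
  | @cons _ u _ h₀ q =>
    rw [Walk.cons_isPath_iff] at hp
    obtain ⟨hq, haq⟩ := hp
    simp only [Walk.getVert_cons_succ, Walk.getVert_zero, Walk.length_cons] at hdiam ⊢
    have hn : ∀ w, T.Adj u w → w ≠ q.getVert 1 → w ∉ q.support := by
      intro w hw hw2 hin
      obtain ⟨r, -, hr⟩ := hT.existsUnique_path u w
      have e1 : q.takeUntil w hin = r := hr _ (hq.takeUntil hin)
      have e2 : Walk.cons hw Walk.nil = r := hr _ (by simp [Walk.isPath_def, hw.ne])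
      have e3 := e1.trans e2.symm
      have hsupp := congrArg Walk.support (q.take_spec hin)
      rw [Walk.support_append, e3] at hsupp
      cases q with
      | nil => simp at hdiam
      | @cons _ u1 _ h₁ q' =>
        simp only [Walk.support_cons, Walk.support_nil, List.cons_append,
          List.nil_append] at hsupp
        injection hsupp with h1 h2
        rw [q'.support_eq_cons] at h2
        injection h2 with h4 h5
        apply hw2
        rw [h4]
        simp [Walk.getVert_cons_succ]
    have hN1 : ∀ w, T.Adj u w → w ≠ q.getVert 1 → ∀ c, T.Adj w c ↔ c = u := by
      intro w hw hw2 c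
      constructor
      · intro hwc
        by_contra hne
        have hwq := hn w hw hw2
        have hcq : c ∉ q.support := by
          intro hcin
          obtain ⟨r, -, hr⟩ := hT.existsUnique_path u c
          have e1 : q.takeUntil c hcin = r := hr _ (hq.takeUntil hcin)
          have e2 : Walk.cons hw (Walk.cons hwc Walk.nil) = r := by
            apply hr
            simp [Walk.isPath_def, hw.ne, hwc.ne, Ne.symm hne]
          have hwmem : w ∈ (q.takeUntil c hcin).support := by
            rw [e1.trans e2.symm]; simp
          exact hwq (q.support_takeUntil_subset hcin hwmem)
        have hrp : (Walk.cons (hwc.symm) (Walk.cons (hw.symm) q)).IsPath := by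
          rw [Walk.cons_isPath_iff, Walk.cons_isPath_iff]
          refine ⟨⟨hq, hwq⟩, ?_⟩
          simp only [Walk.support_cons, List.mem_cons]
          push_neg
          exact ⟨hwc.ne', hcq⟩
        have hll := hlong _ hrp
        simp only [Walk.length_cons] at hll
        omega
      · rintro rfl; exact hw.symm
    cases q with
    | nil => simp at hdiam
    | @cons _ u2 _ h₁ q2 =>
      cases q2 with
      | nil => simp at hdiam
      | @cons _ u3 _ h₂ q3 =>
        simp only [Walk.getVert_cons_succ, Walk.getVert_zero] at hN1 ⊢
        simp only [Walk.support_cons, List.mem_cons, not_or] at haq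
        rw [Walk.cons_isPath_iff] at hq
        obtain ⟨hq2, hu1q⟩ := hq
        rw [Walk.cons_isPath_iff] at hq2
        obtain ⟨hq3, hu2q⟩ := hq2
        simp only [Walk.support_cons, List.mem_cons, not_or] at hu1q
        refine ⟨haq.2.1, ?_, ?_, hN1⟩
        · intro h; rw [h] at haq
          exact haq.2.2 q3.start_mem_support
        · intro h; rw [h] at hu1q
          exact hu1q.2 q3.start_mem_support

variable {V : Type}

lemma core [Fintype V] (T : SimpleGraph V) (F : Set (Sym2 V)) (v0 v1 v2 v3 : V) (x y : ↥F)
    (hxv : (x : Sym2 V) = s(v1,v2)) (hyv : (y : Sym2 V) = s(v2,v3))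
    (hFmem : ∀ e : Sym2 V, e ∈ F ↔ (e = s(v1,v2) ∨ e = s(v2,v3)))
    (h01 : T.Adj v0 v1) (h12 : T.Adj v1 v2) (h23 : T.Adj v2 v3)
    (h02 : v0 ≠ v2) (h03 : v0 ≠ v3) (h13 : v1 ≠ v3)
    (hN1 : ∀ w, T.Adj v1 w → w ≠ v2 → ∀ c, T.Adj w c ↔ c = v1)
    (hP1 : ∀ a b c : V, T.Adj a b → T.Adj b c → T.Adj a c → False)
    (hP2 : ∀ a b b' c : V, T.Adj a b → T.Adj b c → T.Adj a b' → T.Adj b' c → a ≠ c → b = b')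
    (U' : Set (V ⊕ ↥F))
    (hU' : ∀ u ∈ U', ∃ v ∉ U', (subdivide T F).neighborSet v ∩ U' = {u}) :
    ∃ U : Set V, (∀ u ∈ U, ∃ v ∉ U, T.neighborSet v ∩ U = {u}) ∧ U'.ncard ≤ U.ncard + 1 := by
  classical
  set T' := subdivide T F with hT'def
  have ne01 : v0 ≠ v1 := h01.ne
  have ne12 : v1 ≠ v2 := h12.ne
  have ne23 : v2 ≠ v3 := h23.ne
  have n13adj : ¬ T.Adj v1 v3 := fun h => hP1 v1 v2 v3 h12 h23 h
  have hNv0 : ∀ c, T.Adj v0 c ↔ c = v1 := hN1 v0 h01.symm h02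
  have hxyne : x ≠ y := by
    intro h
    have h2 : s(v1,v2) = s(v2,v3) := by rw [← hxv, ← hyv, h]
    rw [Sym2.eq_iff] at h2
    rcases h2 with ⟨h1, -⟩ | ⟨h1, -⟩
    · exact ne12 h1
    · exact h13 h1
  have hee : ∀ e : ↥F, e = x ∨ e = y := by
    rintro ⟨e, he⟩
    rcases (hFmem e).mp he with h | h
    · left; exact Subtype.ext (h.trans hxv.symm)
    · right; exact Subtype.ext (h.trans hyv.symm)
  have hmemF : ∀ a c : V, s(a,c) ∈ F ↔
      (((a = v1 ∧ c = v2) ∨ (a = v2 ∧ c = v1)) ∨ ((a = v2 ∧ c = v3) ∨ (a = v3 ∧ c = v2))) := by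
    intro a c
    rw [hFmem]
    simp only [Sym2.eq_iff]
  have hAgen : ∀ a, a ≠ v1 → a ≠ v2 → a ≠ v3 → ∀ c, (T'.Adj (inl a) (inl c) ↔ T.Adj a c) := by
    intro a ha1 ha2 ha3 c
    show T.Adj a c ∧ s(a,c) ∉ F ↔ T.Adj a c
    rw [hmemF]
    constructor
    · exact fun h => h.1
    · intro h
      refine ⟨h, ?_⟩
      rintro ((⟨h1, -⟩ | ⟨h1, -⟩) | (⟨h1, -⟩ | ⟨h1, -⟩))
      exacts [ha1 h1, ha2 h1, ha2 h1, ha3 h1]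
  have hA1 : ∀ c, T'.Adj (inl v1) (inl c) ↔ (T.Adj v1 c ∧ c ≠ v2) := by
    intro c
    show T.Adj v1 c ∧ s(v1,c) ∉ F ↔ _
    rw [hmemF]
    constructor
    · rintro ⟨h, h2⟩
      exact ⟨h, fun hc => h2 (Or.inl (Or.inl ⟨rfl, hc⟩))⟩
    · rintro ⟨h, h2⟩
      refine ⟨h, ?_⟩
      rintro ((⟨-, hc⟩ | ⟨h1, -⟩) | (⟨h1, -⟩ | ⟨h1, -⟩))
      exacts [h2 hc, ne12 h1, ne12 h1, h13 h1]
  have hA2 : ∀ c, T'.Adj (inl v2) (inl c) ↔ (T.Adj v2 c ∧ c ≠ v1 ∧ c ≠ v3) := by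
    intro c
    show T.Adj v2 c ∧ s(v2,c) ∉ F ↔ _
    rw [hmemF]
    constructor
    · rintro ⟨h, h2⟩
      refine ⟨h, fun hc => h2 (Or.inl (Or.inr ⟨rfl, hc⟩)), fun hc => h2 (Or.inr (Or.inl ⟨rfl, hc⟩))⟩
    · rintro ⟨h, h2, h3⟩
      refine ⟨h, ?_⟩
      rintro ((⟨h1, -⟩ | ⟨-, hc⟩) | (⟨-, hc⟩ | ⟨h1, -⟩))
      exacts [ne12 h1.symm, h2 hc, h3 hc, ne23 h1]
  have hA3 : ∀ c, T'.Adj (inl v3) (inl c) ↔ (T.Adj v3 c ∧ c ≠ v2) := by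
    intro c
    show T.Adj v3 c ∧ s(v3,c) ∉ F ↔ _
    rw [hmemF]
    constructor
    · rintro ⟨h, h2⟩
      exact ⟨h, fun hc => h2 (Or.inr (Or.inr ⟨rfl, hc⟩))⟩
    · rintro ⟨h, h2⟩
      refine ⟨h, ?_⟩
      rintro ((⟨h1, -⟩ | ⟨h1, -⟩) | (⟨h1, -⟩ | ⟨-, hc⟩))
      exacts [h13 h1.symm, ne23 h1.symm, ne23 h1.symm, h2 hc]
  have hAx : ∀ a : V, T'.Adj (inl a) (inr x) ↔ (a = v1 ∨ a = v2) := by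
    intro a
    show a ∈ (x : Sym2 V) ↔ _
    rw [hxv]; exact Sym2.mem_iff
  have hAxr : ∀ a : V, T'.Adj (inr x) (inl a) ↔ (a = v1 ∨ a = v2) := by
    intro a
    show a ∈ (x : Sym2 V) ↔ _
    rw [hxv]; exact Sym2.mem_iff
  have hAy : ∀ a : V, T'.Adj (inl a) (inr y) ↔ (a = v2 ∨ a = v3) := by
    intro a
    show a ∈ (y : Sym2 V) ↔ _
    rw [hyv]; exact Sym2.mem_iff
  have hAyr : ∀ a : V, T'.Adj (inr y) (inl a) ↔ (a = v2 ∨ a = v3) := by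
    intro a
    show a ∈ (y : Sym2 V) ↔ _
    rw [hyv]; exact Sym2.mem_iff
  have hArr : ∀ e f : ↥F, ¬ T'.Adj (inr e) (inr f) := fun _ _ h => h
  have hwit : ∀ {v u'}, (T'.neighborSet v ∩ U' = {u'}) →
      (T'.Adj v u' ∧ u' ∈ U' ∧ (∀ d, T'.Adj v d → d ∈ U' → d = u')) := by
    intro v u' h
    have h1 := Set.ext_iff.mp h
    refine ⟨((h1 u').mpr rfl).1, ((h1 u').mpr rfl).2, fun d hd hdU => (h1 d).mp ⟨hd, hdU⟩⟩
  let UV : Set V := {c | inl c ∈ U'}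
  -- the leaf rule: a leaf neighbor of v1 which is in U' forces v1 to be its witness
  have hFW : ∀ ℓ, T.Adj v1 ℓ → ℓ ≠ v2 → inl ℓ ∈ U' →
      (inl v1 ∉ U') ∧ (∀ d, T'.Adj (inl v1) d → d ∈ U' → d = inl ℓ) := by
    intro ℓ hadj hne hℓ
    obtain ⟨v, hvS, hvN⟩ := hU' _ hℓ
    obtain ⟨hva, -, hvu⟩ := hwit hvN
    have hv : v = inl v1 := by
      rcases v with c | e
      · have hc : T.Adj ℓ c := hva.1.symm
        rw [hN1 ℓ hadj hne c] at hc
        rw [hc]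
      · exfalso
        rcases hee e with rfl | rfl
        · rcases (hAxr ℓ).mp hva with h | h
          · exact T.loopless.irrefl v1 (h ▸ hadj)
          · exact hne h
        · rcases (hAyr ℓ).mp hva with h | h
          · exact hne h
          · exact n13adj (h ▸ hadj)
    subst hv
    exact ⟨hvS, hvu⟩
  -- generic pair construction
  have hpair : ∀ (U : Set V) (u w : V), u ∈ U → T.Adj w u → w ∉ U →
      (∀ c, T.Adj w c → c ∈ U → c = u) → ∃ v ∉ U, T.neighborSet v ∩ U = {u} := by
    intro U u w h0 h1 h2 h3
    refine ⟨w, h2, ?_⟩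
    ext c
    simp only [Set.mem_inter_iff, mem_neighborSet, Set.mem_singleton_iff]
    constructor
    · rintro ⟨hc1, hc2⟩; exact h3 c hc1 hc2
    · rintro rfl; exact ⟨h1, h0⟩
  -- generic witness handling
  have hgen : ∀ (U : Set V) (u : V), u ∈ U → (∀ c ∈ U, inl c ∈ U' ∨ c = v0 ∨ c = v1) →
      (v0 ∈ U → v1 ∉ U) →
      ∀ a : V, a ≠ v1 → a ≠ v2 → a ≠ v3 → inl a ∉ U' → T'.Adj (inl a) (inl u) →
      (∀ d, T'.Adj (inl a) d → d ∈ U' → d = inl u) →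
      ∃ v ∉ U, T.neighborSet v ∩ U = {u} := by
    intro U u h0 hUsub hv01U a ha1 ha2 ha3 haS hadj huniq
    have hTau : T.Adj a u := hadj.1
    refine hpair U u a h0 hTau ?_ ?_
    · intro haU
      rcases hUsub a haU with h | h | h
      · exact haS h
      · subst h
        have := (hNv0 u).mp hTau
        subst this
        exact hv01U haU h0
      · exact ha1 h
    · intro c hac hcU
      rcases hUsub c hcU with h | h | h
      · have h2 := huniq (inl c) ((hAgen a ha1 ha2 ha3 c).mpr hac) h
        exact inl.inj h2
      · subst h
        exact absurd ((hNv0 a).mp hac.symm) ha1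
      · subst h
        have h4 := (hN1 a hac.symm ha2 u).mp hTau
        exact h4.symm ▸ rfl
  -- specialized pair constructions
  have hpairV0 : ∀ (U : Set V), v1 ∈ U → v0 ∉ U → ∃ v ∉ U, T.neighborSet v ∩ U = {v1} := by
    intro U h0 h2
    exact hpair U v1 v0 h0 h01 h2 (fun c hc _ => (hNv0 c).mp hc)
  have hpairV1 : ∀ (U : Set V) (u : V), u ∈ U → (∀ c ∈ U, inl c ∈ U') → v2 ∉ U →
      inl v1 ∉ U' → T'.Adj (inl v1) (inl u) → (∀ d, T'.Adj (inl v1) d → d ∈ U' → d = inl u) →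
      ∃ v ∉ U, T.neighborSet v ∩ U = {u} := by
    intro U u h0 hUsub h2U h1S hadj huniq
    refine hpair U u v1 h0 ((hA1 u).mp hadj).1 (fun h => h1S (hUsub _ h)) ?_
    intro c hc hcU
    by_cases hc2 : c = v2
    · exact absurd (hc2 ▸ hcU) h2U
    · exact inl.inj (huniq (inl c) ((hA1 c).mpr ⟨hc, hc2⟩) (hUsub c hcU))
  have hpairV3 : ∀ (U : Set V) (u : V), u ∈ U → (∀ c ∈ U, inl c ∈ U' ∨ c = v0 ∨ c = v1) →
      v2 ∉ U → inl v3 ∉ U' → T'.Adj (inl v3) (inl u) →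
      (∀ d, T'.Adj (inl v3) d → d ∈ U' → d = inl u) →
      ∃ v ∉ U, T.neighborSet v ∩ U = {u} := by
    intro U u h0 hUsub h2U h3S hadj huniq
    refine hpair U u v3 h0 ((hA3 u).mp hadj).1 ?_ ?_
    · intro h
      rcases hUsub _ h with h2 | h2 | h2
      · exact h3S h2
      · exact h03 h2.symm
      · exact h13 h2.symm
    · intro c hc hcU
      rcases hUsub _ hcU with h2 | h2 | h2
      · by_cases hc2 : c = v2
        · exact absurd (hc2 ▸ hcU) h2U
        · exact inl.inj (huniq (inl c) ((hA3 c).mpr ⟨hc, hc2⟩) h2)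
      · subst h2
        exact absurd ((hNv0 v3).mp hc.symm).symm h13
      · subst h2
        exact absurd hc.symm n13adj
  have hpairV2A : ∀ (U : Set V) (u : V), u ∈ U → (∀ c ∈ U, inl c ∈ U' ∨ c = v0) →
      v1 ∉ U → v3 ∉ U → inl v2 ∉ U' → T'.Adj (inl v2) (inl u) →
      (∀ d, T'.Adj (inl v2) d → d ∈ U' → d = inl u) →
      ∃ v ∉ U, T.neighborSet v ∩ U = {u} := by
    intro U u h0 hUsub h1U h3U h2S hadj huniq
    refine hpair U u v2 h0 ((hA2 u).mp hadj).1 ?_ ?_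
    · intro h
      rcases hUsub _ h with h2 | h2
      · exact h2S h2
      · exact h02 h2.symm
    · intro c hc hcU
      rcases hUsub _ hcU with h2 | h2
      · have hc1 : c ≠ v1 := fun h => h1U (h ▸ hcU)
        have hc3 : c ≠ v3 := fun h => h3U (h ▸ hcU)
        exact inl.inj (huniq (inl c) ((hA2 c).mpr ⟨hc, hc1, hc3⟩) h2)
      · subst h2
        exact absurd ((hNv0 v2).mp hc.symm).symm ne12
  have hpairV2B : ∀ (U : Set V), v3 ∈ U → (∀ c ∈ U, inl c ∈ U' ∨ c = v0) →
      v1 ∉ U → v2 ∉ U → (∀ w, T.Adj v2 w → w ≠ v1 → w ≠ v3 → inl w ∉ U') →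
      ∃ v ∉ U, T.neighborSet v ∩ U = {v3} := by
    intro U h0 hUsub h1U h2U hW3
    refine hpair U v3 v2 h0 h23 h2U ?_
    intro c hc hcU
    rcases hUsub _ hcU with h2 | h2
    · by_cases hc3 : c = v3
      · exact hc3
      · exfalso
        have hc1 : c ≠ v1 := fun h => h1U (h ▸ hcU)
        exact hW3 c hc hc1 hc3 h2
    · subst h2
      exact absurd ((hNv0 v2).mp hc.symm).symm ne12
  have hpairV3B : ∀ (U : Set V), v2 ∈ U → (∀ c ∈ U, inl c ∈ U' ∨ c = v0 ∨ c = v1) →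
      inl v3 ∉ U' → (∀ z, T.Adj v3 z → z ≠ v2 → inl z ∉ U') →
      ∃ v ∉ U, T.neighborSet v ∩ U = {v2} := by
    intro U h0 hUsub h3S hZ4
    refine hpair U v2 v3 h0 h23.symm ?_ ?_
    · intro h
      rcases hUsub _ h with h2 | h2 | h2
      · exact h3S h2
      · exact h03 h2.symm
      · exact h13 h2.symm
    · intro c hc hcU
      rcases hUsub _ hcU with h2 | h2 | h2
      · by_cases hc2 : c = v2
        · exact hc2
        · exact absurd h2 (hZ4 c hc hc2)
      · subst h2
        exact absurd ((hNv0 v3).mp hc.symm).symm h13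
      · subst h2
        exact absurd hc.symm n13adj
  -- cardinality helpers
  have hUVcard : ∀ t : V, UV.ncard ≤ (UV \ {t}).ncard + 1 := by
    intro t
    by_cases h : t ∈ UV
    · rw [Set.ncard_diff_singleton_add_one h (Set.toFinite _)]
    · rw [Set.diff_singleton_eq_self h]
      exact Nat.le_succ _
  have hcard2 : U'.ncard ≤ UV.ncard + 2 := by
    have hsub : U' ⊆ insert (inr x) (insert (inr y) (inl '' UV)) := by
      rintro (c | e) h
      · exact Set.mem_insert_of_mem _ (Set.mem_insert_of_mem _ ⟨c, h, rfl⟩)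
      · rcases hee e with rfl | rfl
        · exact Set.mem_insert _ _
        · exact Set.mem_insert_of_mem _ (Set.mem_insert _ _)
    calc U'.ncard ≤ _ := Set.ncard_le_ncard hsub (Set.toFinite _)
    _ ≤ (insert (inr y) (inl '' UV)).ncard + 1 := Set.ncard_insert_le _ _
    _ ≤ (inl '' UV).ncard + 1 + 1 := by have := Set.ncard_insert_le (inr y : V ⊕ ↥F) (inl '' UV); omega
    _ = UV.ncard + 2 := by rw [Set.ncard_image_of_injective _ inl_injective]
  have hcard1 : (inr x ∉ U' ∨ inr y ∉ U') → U'.ncard ≤ UV.ncard + 1 := by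
    intro hc
    have hsub : ∀ z : V ⊕ ↥F, (∀ e, z = inr e → e = x ∨ e = y) → True := fun _ _ => trivial
    rcases hc with hc | hc
    · have hsub : U' ⊆ insert (inr y) (inl '' UV) := by
        rintro (c | e) h
        · exact Set.mem_insert_of_mem _ ⟨c, h, rfl⟩
        · rcases hee e with rfl | rfl
          · exact absurd h hc
          · exact Set.mem_insert _ _
      calc U'.ncard ≤ _ := Set.ncard_le_ncard hsub (Set.toFinite _)
      _ ≤ (inl '' UV).ncard + 1 := Set.ncard_insert_le _ _
      _ = UV.ncard + 1 := by rw [Set.ncard_image_of_injective _ inl_injective]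
    · have hsub : U' ⊆ insert (inr x) (inl '' UV) := by
        rintro (c | e) h
        · exact Set.mem_insert_of_mem _ ⟨c, h, rfl⟩
        · rcases hee e with rfl | rfl
          · exact Set.mem_insert _ _
          · exact absurd h hc
      calc U'.ncard ≤ _ := Set.ncard_le_ncard hsub (Set.toFinite _)
      _ ≤ (inl '' UV).ncard + 1 := Set.ncard_insert_le _ _
      _ = UV.ncard + 1 := by rw [Set.ncard_image_of_injective _ inl_injective]
  have hcard0 : inr x ∉ U' → inr y ∉ U' → U'.ncard ≤ UV.ncard := by
    intro hcx hcy
    have hsub : U' ⊆ inl '' UV := by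
      rintro (c | e) h
      · exact ⟨c, h, rfl⟩
      · rcases hee e with rfl | rfl
        · exact absurd h hcx
        · exact absurd h hcy
    calc U'.ncard ≤ _ := Set.ncard_le_ncard hsub (Set.toFinite _)
    _ = UV.ncard := Set.ncard_image_of_injective _ inl_injective
  by_cases hx : inr x ∈ U'
  · by_cases hy : inr y ∈ U'
    · -- CASE I : both x and y in U'
      obtain ⟨vx, hvxS, hvxN⟩ := hU' _ hx
      obtain ⟨hvxa, -, hvxu⟩ := hwit hvxN
      obtain ⟨vy, hvyS, hvyN⟩ := hU' _ hy
      obtain ⟨hvya, -, hvyu⟩ := hwit hvyN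
      have hvx1 : vx = inl v1 := by
        rcases vx with aX | eX
        · rcases (hAx aX).mp hvxa with h | h
          · rw [h]
          · exfalso
            subst h
            have h2 := hvxu (inr y) ((hAy aX).mpr (Or.inl rfl)) hy
            exact hxyne (inr_injective h2).symm
        · exact absurd hvxa (hArr _ _)
      subst hvx1
      have hvy3 : vy = inl v3 := by
        rcases vy with aY | eY
        · rcases (hAy aY).mp hvya with h | h
          · exfalso
            subst h
            have h2 := hvyu (inr x) ((hAx aY).mpr (Or.inr rfl)) hx
            exact hxyne (inr_injective h2)
          · rw [h]
        · exact absurd hvya (hArr _ _)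
      subst hvy3
      have hv1UV : v1 ∉ UV := hvxS
      have hv3UV : v3 ∉ UV := hvyS
      have hL1 : ∀ ℓ, T.Adj v1 ℓ → ℓ ≠ v2 → ℓ ∉ UV := by
        intro ℓ h hne hℓ
        have h2 := hvxu (inl ℓ) ((hA1 ℓ).mpr ⟨h, hne⟩) hℓ
        simp at h2
      have hv0UV : v0 ∉ UV := hL1 v0 h01.symm h02
      refine ⟨insert v1 UV, ?_, ?_⟩
      · intro u hu
        rw [Set.mem_insert_iff] at hu
        rcases hu with rfl | huUV
        · refine hpair _ u v0 (Set.mem_insert _ _) h01 ?_ ?_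
          · intro h
            rw [Set.mem_insert_iff] at h
            rcases h with h | h
            · exact ne01 h
            · exact hv0UV h
          · intro c hc _
            exact (hNv0 c).mp hc
        · have hu1 : u ≠ v1 := fun h => hv1UV (h ▸ huUV)
          have hu3 : u ≠ v3 := fun h => hv3UV (h ▸ huUV)
          obtain ⟨v, hvS, hvN⟩ := hU' (inl u) huUV
          obtain ⟨hva, -, hvu⟩ := hwit hvN
          rcases v with a | e
          · by_cases ha1 : a = v1
            · subst ha1
              exfalso
              have h2 := hvxu (inl u) hva huUV
              simp at h2
            · by_cases ha2 : a = v2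
              · subst ha2
                exfalso
                have h2 := hvu (inr x) ((hAx a).mpr (Or.inr rfl)) hx
                simp at h2
              · by_cases ha3 : a = v3
                · subst ha3
                  exfalso
                  have h2 := hvu (inr y) ((hAy a).mpr (Or.inr rfl)) hy
                  simp at h2
                · refine hgen _ u (Set.mem_insert_of_mem _ huUV) ?_ ?_ a ha1 ha2 ha3 hvS hva hvu
                  · intro c hc
                    rw [Set.mem_insert_iff] at hc
                    rcases hc with h | h
                    · right; right; exact h
                    · left; exact h
                  · intro h
                    exfalso
                    rw [Set.mem_insert_iff] at h
                    rcases h with h | h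
                    · exact ne01 h
                    · exact hv0UV h
          · exfalso
            rcases hee e with rfl | rfl
            · exact hvS hx
            · exact hvS hy
      · have h1 : (insert v1 UV).ncard = UV.ncard + 1 :=
          Set.ncard_insert_of_notMem hv1UV (Set.toFinite _)
        omega
    · -- CASE II : x ∈ U', y ∉ U'
      obtain ⟨vx, hvxS, hvxN⟩ := hU' _ hx
      obtain ⟨hvxa, -, hvxu⟩ := hwit hvxN
      have hvx12 : vx = inl v1 ∨ vx = inl v2 := by
        rcases vx with aX | eX
        · rcases (hAx aX).mp hvxa with h | h
          · left; rw [h]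
          · right; rw [h]
        · exact absurd hvxa (hArr _ _)
      rcases hvx12 with rfl | rfl
      · -- IIa : x's witness is v1
        have hv1UV : inl v1 ∉ U' := hvxS
        have hL1 : ∀ ℓ, T.Adj v1 ℓ → ℓ ≠ v2 → inl ℓ ∉ U' := by
          intro ℓ h hne hℓ
          have h2 := hvxu (inl ℓ) ((hA1 ℓ).mpr ⟨h, hne⟩) hℓ
          simp at h2
        have hv0UV : inl v0 ∉ U' := hL1 v0 h01.symm h02
        by_cases h3UV : inl v3 ∈ U'
        · obtain ⟨v4, hv4S, hv4N⟩ := hU' _ h3UV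
          obtain ⟨hv4a, -, hv4u⟩ := hwit hv4N
          rcases v4 with z | e4
          · -- v3's witness is a vertex z : drop v2, add v1
            have hzadj : T.Adj z v3 := hv4a.1
            have hz3 : z ≠ v3 := fun h => T.loopless.irrefl v3 (h ▸ hzadj)
            have hz1 : z ≠ v1 := fun h => n13adj (h ▸ hzadj)
            have hz2 : z ≠ v2 := by
              intro h
              have h2 := (hA2 v3).mp (h ▸ hv4a)
              exact h2.2.2 rfl
            refine ⟨insert v1 (UV \ {v2}), ?_, ?_⟩
            · intro u hu
              rw [Set.mem_insert_iff, Set.mem_diff, Set.mem_singleton_iff] at hu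
              rcases hu with rfl | ⟨huUV, hu2⟩
              · refine hpairV0 _ (Set.mem_insert _ _) ?_
                intro h
                rw [Set.mem_insert_iff, Set.mem_diff] at h
                rcases h with h | ⟨h, -⟩
                · exact ne01 h
                · exact hv0UV h
              · have hu1 : u ≠ v1 := fun h => hv1UV (h ▸ huUV)
                by_cases hu3 : u = v3
                · refine hpair _ _ z ?_ ?_ ?_ ?_
                  · exact Set.mem_insert_of_mem _ ⟨huUV, hu2⟩
                  · rw [hu3]; exact hzadj
                  · intro h
                    rw [Set.mem_insert_iff, Set.mem_diff] at h
                    rcases h with h | ⟨h, -⟩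
                    · exact hz1 h
                    · exact hv4S h
                  · intro c hc hcU
                    rw [Set.mem_insert_iff, Set.mem_diff, Set.mem_singleton_iff] at hcU
                    rw [hu3]
                    rcases hcU with rfl | ⟨hcUV, hc2⟩
                    · exact absurd (hP2 c z v2 v3 hc.symm hzadj h12 h23 h13) hz2
                    · exact inl.inj (hv4u (inl c) ((hAgen z hz1 hz2 hz3 c).mpr hc) hcUV)
                · obtain ⟨v, hvS, hvN⟩ := hU' (inl u) huUV
                  obtain ⟨hva, -, hvu⟩ := hwit hvN
                  rcases v with a | e
                  · by_cases ha1 : a = v1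
                    · exfalso
                      have h2 := hvxu (inl u) (ha1 ▸ hva) huUV
                      simp at h2
                    · by_cases ha2 : a = v2
                      · exfalso
                        have h2 := hvu (inr x) ((hAx a).mpr (Or.inr ha2)) hx
                        simp at h2
                      · by_cases ha3 : a = v3
                        · exfalso; exact hvS (by rw [ha3]; exact h3UV)
                        · refine hgen _ u (Set.mem_insert_of_mem _ ⟨huUV, hu2⟩) ?_ ?_ a ha1 ha2 ha3 hvS hva hvu
                          · intro c hc
                            rw [Set.mem_insert_iff, Set.mem_diff] at hc
                            rcases hc with h | ⟨h, -⟩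
                            · right; right; exact h
                            · left; exact h
                          · intro h
                            exfalso
                            rw [Set.mem_insert_iff, Set.mem_diff] at h
                            rcases h with h | ⟨h, -⟩
                            · exact ne01 h
                            · exact hv0UV h
                  · exfalso
                    rcases hee e with rfl | rfl
                    · exact hvS hx
                    · rcases (hAyr u).mp hva with h | h
                      · exact hu2 h
                      · exact hu3 h
            · have h1 : (insert v1 (UV \ {v2})).ncard = (UV \ {v2}).ncard + 1 :=
                Set.ncard_insert_of_notMem (fun h => hv1UV h.1) (Set.toFinite _)
              have h2 := hUVcard v2
              have h3 := hcard1 (Or.inr hy)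
              omega
          · rcases hee e4 with rfl | rfl
            · exact absurd hx hv4S
            · -- v3's witness is y : drop v3, add v1
              have h2UV : inl v2 ∉ U' := by
                intro h
                have h2 := hv4u (inl v2) ((hAyr v2).mpr (Or.inl rfl)) h
                exact ne23 (inl.inj h2)
              refine ⟨insert v1 (UV \ {v3}), ?_, ?_⟩
              · intro u hu
                rw [Set.mem_insert_iff, Set.mem_diff, Set.mem_singleton_iff] at hu
                rcases hu with rfl | ⟨huUV, hu3⟩
                · refine hpairV0 _ (Set.mem_insert _ _) ?_
                  intro h
                  rw [Set.mem_insert_iff, Set.mem_diff] at h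
                  rcases h with h | ⟨h, -⟩
                  · exact ne01 h
                  · exact hv0UV h
                · have hu1 : u ≠ v1 := fun h => hv1UV (h ▸ huUV)
                  have hu2 : u ≠ v2 := fun h => h2UV (h ▸ huUV)
                  obtain ⟨v, hvS, hvN⟩ := hU' (inl u) huUV
                  obtain ⟨hva, -, hvu⟩ := hwit hvN
                  rcases v with a | e
                  · by_cases ha1 : a = v1
                    · exfalso
                      have h2 := hvxu (inl u) (ha1 ▸ hva) huUV
                      simp at h2
                    · by_cases ha2 : a = v2
                      · exfalso
                        have h2 := hvu (inr x) ((hAx a).mpr (Or.inr ha2)) hx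
                        simp at h2
                      · by_cases ha3 : a = v3
                        · exfalso; exact hvS (by rw [ha3]; exact h3UV)
                        · refine hgen _ u (Set.mem_insert_of_mem _ ⟨huUV, hu3⟩) ?_ ?_ a ha1 ha2 ha3 hvS hva hvu
                          · intro c hc
                            rw [Set.mem_insert_iff, Set.mem_diff] at hc
                            rcases hc with h | ⟨h, -⟩
                            · right; right; exact h
                            · left; exact h
                          · intro h
                            exfalso
                            rw [Set.mem_insert_iff, Set.mem_diff] at h
                            rcases h with h | ⟨h, -⟩
                            · exact ne01 h
                            · exact hv0UV h
                  · exfalso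
                    rcases hee e with rfl | rfl
                    · exact hvS hx
                    · rcases (hAyr u).mp hva with h | h
                      · exact hu2 h
                      · exact hu3 h
              · have h1 : (insert v1 (UV \ {v3})).ncard = (UV \ {v3}).ncard + 1 :=
                  Set.ncard_insert_of_notMem (fun h => hv1UV h.1) (Set.toFinite _)
                have h2 : (UV \ {v3}).ncard + 1 = UV.ncard :=
                  Set.ncard_diff_singleton_add_one h3UV (Set.toFinite _)
                have h3 := hcard1 (Or.inr hy)
                omega
        · -- v3 ∉ U' : drop v2, add v1
          refine ⟨insert v1 (UV \ {v2}), ?_, ?_⟩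
          · intro u hu
            rw [Set.mem_insert_iff, Set.mem_diff, Set.mem_singleton_iff] at hu
            rcases hu with rfl | ⟨huUV, hu2⟩
            · refine hpairV0 _ (Set.mem_insert _ _) ?_
              intro h
              rw [Set.mem_insert_iff, Set.mem_diff] at h
              rcases h with h | ⟨h, -⟩
              · exact ne01 h
              · exact hv0UV h
            · have hu1 : u ≠ v1 := fun h => hv1UV (h ▸ huUV)
              have hu3 : u ≠ v3 := fun h => h3UV (h ▸ huUV)
              obtain ⟨v, hvS, hvN⟩ := hU' (inl u) huUV
              obtain ⟨hva, -, hvu⟩ := hwit hvN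
              rcases v with a | e
              · by_cases ha1 : a = v1
                · exfalso
                  have h2 := hvxu (inl u) (ha1 ▸ hva) huUV
                  simp at h2
                · by_cases ha2 : a = v2
                  · exfalso
                    have h2 := hvu (inr x) ((hAx a).mpr (Or.inr ha2)) hx
                    simp at h2
                  · by_cases ha3 : a = v3
                    · refine hpairV3 _ u (Set.mem_insert_of_mem _ ⟨huUV, hu2⟩) ?_ ?_ (ha3 ▸ hvS) (ha3 ▸ hva) (ha3 ▸ hvu)
                      · intro c hc
                        rw [Set.mem_insert_iff, Set.mem_diff] at hc
                        rcases hc with h | ⟨h, -⟩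
                        · right; right; exact h
                        · left; exact h
                      · intro h
                        rw [Set.mem_insert_iff, Set.mem_diff, Set.mem_singleton_iff] at h
                        rcases h with h | ⟨-, h⟩
                        · exact ne12 h.symm
                        · exact h rfl
                    · refine hgen _ u (Set.mem_insert_of_mem _ ⟨huUV, hu2⟩) ?_ ?_ a ha1 ha2 ha3 hvS hva hvu
                      · intro c hc
                        rw [Set.mem_insert_iff, Set.mem_diff] at hc
                        rcases hc with h | ⟨h, -⟩
                        · right; right; exact h
                        · left; exact h
                      · intro h
                        exfalso
                        rw [Set.mem_insert_iff, Set.mem_diff] at h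
                        rcases h with h | ⟨h, -⟩
                        · exact ne01 h
                        · exact hv0UV h
              · exfalso
                rcases hee e with rfl | rfl
                · exact hvS hx
                · rcases (hAyr u).mp hva with h | h
                  · exact hu2 h
                  · exact hu3 h
          · have h1 : (insert v1 (UV \ {v2})).ncard = (UV \ {v2}).ncard + 1 :=
              Set.ncard_insert_of_notMem (fun h => hv1UV h.1) (Set.toFinite _)
            have h2 := hUVcard v2
            have h3 := hcard1 (Or.inr hy)
            omega
      · -- IIb : x's witness is v2
        have hv2UV : inl v2 ∉ U' := hvxS
        have hW3 : ∀ w, T.Adj v2 w → w ≠ v1 → w ≠ v3 → inl w ∉ U' := by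
          intro w h hn1 hn3 hw
          have h2 := hvxu (inl w) ((hA2 w).mpr ⟨h, hn1, hn3⟩) hw
          simp at h2
        by_cases h1UV : inl v1 ∈ U'
        · -- swap v1 out, v0 in
          have hv0UV : inl v0 ∉ U' := fun h => (hFW v0 h01.symm h02 h).1 h1UV
          have hLempty : ∀ ℓ, T.Adj v1 ℓ → ℓ ≠ v2 → inl ℓ ∉ U' :=
            fun ℓ ha hn hℓ => (hFW ℓ ha hn hℓ).1 h1UV
          refine ⟨insert v0 (UV \ {v1}), ?_, ?_⟩
          · intro u hu
            rw [Set.mem_insert_iff, Set.mem_diff, Set.mem_singleton_iff] at hu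
            rcases hu with rfl | ⟨huUV, hu1⟩
            · refine hpair _ _ v1 (Set.mem_insert _ _) h01.symm ?_ ?_
              · intro h
                rw [Set.mem_insert_iff, Set.mem_diff, Set.mem_singleton_iff] at h
                rcases h with h | ⟨-, h⟩
                · exact ne01 h.symm
                · exact h rfl
              · intro c hc hcU
                rw [Set.mem_insert_iff, Set.mem_diff, Set.mem_singleton_iff] at hcU
                rcases hcU with rfl | ⟨hcUV, hc1⟩
                · rfl
                · exfalso
                  by_cases hc2 : c = v2
                  · exact hv2UV (hc2 ▸ hcUV)
                  · exact hLempty c hc hc2 hcUV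
            · obtain ⟨v, hvS, hvN⟩ := hU' (inl u) huUV
              obtain ⟨hva, -, hvu⟩ := hwit hvN
              rcases v with a | e
              · by_cases ha1 : a = v1
                · exfalso; exact hvS (by rw [ha1]; exact h1UV)
                · by_cases ha2 : a = v2
                  · exfalso
                    have h2 := hvu (inr x) ((hAx a).mpr (Or.inr ha2)) hx
                    simp at h2
                  · by_cases ha3 : a = v3
                    · refine hpairV3 _ u (Set.mem_insert_of_mem _ ⟨huUV, hu1⟩) ?_ ?_ (ha3 ▸ hvS) (ha3 ▸ hva) (ha3 ▸ hvu)
                      · intro c hc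
                        rw [Set.mem_insert_iff, Set.mem_diff] at hc
                        rcases hc with h | ⟨h, -⟩
                        · right; left; exact h
                        · left; exact h
                      · intro h
                        rw [Set.mem_insert_iff, Set.mem_diff] at h
                        rcases h with h | ⟨h, -⟩
                        · exact h02 h.symm
                        · exact hv2UV h
                    · refine hgen _ u (Set.mem_insert_of_mem _ ⟨huUV, hu1⟩) ?_ ?_ a ha1 ha2 ha3 hvS hva hvu
                      · intro c hc
                        rw [Set.mem_insert_iff, Set.mem_diff] at hc
                        rcases hc with h | ⟨h, -⟩
                        · right; left; exact h
                        · left; exact h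
                      · intro h0 h1in
                        rw [Set.mem_insert_iff, Set.mem_diff, Set.mem_singleton_iff] at h1in
                        rcases h1in with h | ⟨-, h⟩
                        · exact ne01 h.symm
                        · exact h rfl
              · rcases hee e with rfl | rfl
                · exact absurd hx hvS
                · rcases (hAyr u).mp hva with h | h
                  · exact absurd (h ▸ huUV) hv2UV
                  · rw [h]
                    refine hpairV2B _ ?_ ?_ ?_ ?_ hW3
                    · exact Set.mem_insert_of_mem _ ⟨h ▸ huUV, fun hh => h13 hh.symm⟩
                    · intro c hc
                      rw [Set.mem_insert_iff, Set.mem_diff] at hc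
                      rcases hc with hh | ⟨hh, -⟩
                      · right; exact hh
                      · left; exact hh
                    · intro hh
                      rw [Set.mem_insert_iff, Set.mem_diff, Set.mem_singleton_iff] at hh
                      rcases hh with hh | ⟨-, hh⟩
                      · exact ne01 hh.symm
                      · exact hh rfl
                    · intro hh
                      rw [Set.mem_insert_iff, Set.mem_diff] at hh
                      rcases hh with hh | ⟨hh, -⟩
                      · exact h02 hh.symm
                      · exact hv2UV hh
          · have h1 : (insert v0 (UV \ {v1})).ncard = (UV \ {v1}).ncard + 1 :=
              Set.ncard_insert_of_notMem (fun h => hv0UV h.1) (Set.toFinite _)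
            have h2 : (UV \ {v1}).ncard + 1 = UV.ncard :=
              Set.ncard_diff_singleton_add_one h1UV (Set.toFinite _)
            have h3 := hcard1 (Or.inr hy)
            omega
        · -- v1 ∉ U' : keep UV
          refine ⟨UV, ?_, ?_⟩
          · intro u huUV
            obtain ⟨v, hvS, hvN⟩ := hU' (inl u) huUV
            obtain ⟨hva, -, hvu⟩ := hwit hvN
            rcases v with a | e
            · by_cases ha1 : a = v1
              · exact hpairV1 _ u huUV (fun c hc => hc) hv2UV h1UV (ha1 ▸ hva) (ha1 ▸ hvu)
              · by_cases ha2 : a = v2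
                · exfalso
                  have h2 := hvu (inr x) ((hAx a).mpr (Or.inr ha2)) hx
                  simp at h2
                · by_cases ha3 : a = v3
                  · exact hpairV3 _ u huUV (fun c hc => Or.inl hc) hv2UV (ha3 ▸ hvS) (ha3 ▸ hva) (ha3 ▸ hvu)
                  · exact hgen _ u huUV (fun c hc => Or.inl hc) (fun _ h => h1UV h) a ha1 ha2 ha3 hvS hva hvu
            · rcases hee e with rfl | rfl
              · exact absurd hx hvS
              · rcases (hAyr u).mp hva with h | h
                · exact absurd (h ▸ huUV) hv2UV
                · rw [h]
                  exact hpairV2B _ (h ▸ huUV) (fun c hc => Or.inl hc) (fun hh => h1UV hh) (fun hh => hv2UV hh) hW3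
          · exact hcard1 (Or.inr hy)
  · by_cases hy : inr y ∈ U'
    · -- CASE III : y ∈ U', x ∉ U'
      obtain ⟨vy, hvyS, hvyN⟩ := hU' _ hy
      obtain ⟨hvya, -, hvyu⟩ := hwit hvyN
      have hvy23 : vy = inl v2 ∨ vy = inl v3 := by
        rcases vy with aY | eY
        · rcases (hAy aY).mp hvya with h | h
          · left; rw [h]
          · right; rw [h]
        · exact absurd hvya (hArr _ _)
      rcases hvy23 with rfl | rfl
      · -- IIIa : y's witness is v2 : keep UV
        have hv2UV : inl v2 ∉ U' := hvyS
        refine ⟨UV, ?_, ?_⟩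
        · intro u huUV
          obtain ⟨v, hvS, hvN⟩ := hU' (inl u) huUV
          obtain ⟨hva, -, hvu⟩ := hwit hvN
          rcases v with a | e
          · by_cases ha1 : a = v1
            · exact hpairV1 _ u huUV (fun c hc => hc) hv2UV (ha1 ▸ hvS) (ha1 ▸ hva) (ha1 ▸ hvu)
            · by_cases ha2 : a = v2
              · exfalso
                have h2 := hvyu (inl u) (ha2 ▸ hva) huUV
                simp at h2
              · by_cases ha3 : a = v3
                · exact hpairV3 _ u huUV (fun c hc => Or.inl hc) hv2UV (ha3 ▸ hvS) (ha3 ▸ hva) (ha3 ▸ hvu)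
                · refine hgen _ u huUV (fun c hc => Or.inl hc) ?_ a ha1 ha2 ha3 hvS hva hvu
                  intro h h1
                  exact (hFW v0 h01.symm h02 h).1 h1
          · rcases hee e with rfl | rfl
            · rcases (hAxr u).mp hva with h | h
              · rw [h]
                refine hpairV0 _ (h ▸ huUV) ?_
                intro hh
                exact (hFW v0 h01.symm h02 hh).1 (h ▸ huUV)
              · exact absurd (h ▸ huUV) hv2UV
            · exact absurd hy hvS
        · exact hcard1 (Or.inl hx)
      · -- IIIb : y's witness is v3
        have hv3UV : inl v3 ∉ U' := hvyS
        have hZ4 : ∀ z, T.Adj v3 z → z ≠ v2 → inl z ∉ U' := by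
          intro z h hn hz
          have h2 := hvyu (inl z) ((hA3 z).mpr ⟨h, hn⟩) hz
          simp at h2
        by_cases h2UV : inl v2 ∈ U'
        · by_cases hL : ∃ ℓ, T.Adj v1 ℓ ∧ ℓ ≠ v2 ∧ inl ℓ ∈ U'
          · obtain ⟨ℓ, hℓa, hℓ2, hℓU⟩ := hL
            obtain ⟨hv1S, hFWN⟩ := hFW ℓ hℓa hℓ2 hℓU
            have hℓ1 : ℓ ≠ v1 := hℓa.ne'
            refine ⟨insert v1 (UV \ {ℓ}), ?_, ?_⟩
            · intro u hu
              rw [Set.mem_insert_iff, Set.mem_diff, Set.mem_singleton_iff] at hu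
              rcases hu with hu1eq | ⟨huUV, huℓ⟩
              · rw [hu1eq]
                refine hpair _ _ ℓ (Set.mem_insert _ _) ((hN1 ℓ hℓa hℓ2 v1).mpr rfl) ?_ ?_
                · intro h
                  rw [Set.mem_insert_iff, Set.mem_diff, Set.mem_singleton_iff] at h
                  rcases h with h | ⟨-, h⟩
                  · exact hℓ1 h
                  · exact h rfl
                · intro c hc _
                  exact (hN1 ℓ hℓa hℓ2 c).mp hc
              · have hu1 : u ≠ v1 := fun h => hv1S (h ▸ huUV)
                by_cases hu2 : u = v2
                · rw [hu2]
                  refine hpairV3B _ (Set.mem_insert_of_mem _ ⟨hu2 ▸ huUV, fun hh => hℓ2 hh.symm⟩) ?_ hv3UV hZ4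
                  intro c hc
                  rw [Set.mem_insert_iff, Set.mem_diff] at hc
                  rcases hc with h | ⟨h, -⟩
                  · right; right; exact h
                  · left; exact h
                · obtain ⟨v, hvS, hvN⟩ := hU' (inl u) huUV
                  obtain ⟨hva, -, hvu⟩ := hwit hvN
                  rcases v with a | e
                  · by_cases ha1 : a = v1
                    · exfalso
                      have h2 := hFWN (inl u) (ha1 ▸ hva) huUV
                      exact huℓ (inl.inj h2)
                    · by_cases ha2 : a = v2
                      · exfalso; exact hvS (by rw [ha2]; exact h2UV)
                      · by_cases ha3 : a = v3
                        · exfalso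
                          have h2 := hvyu (inl u) (ha3 ▸ hva) huUV
                          simp at h2
                        · refine hgen _ u (Set.mem_insert_of_mem _ ⟨huUV, huℓ⟩) ?_ ?_ a ha1 ha2 ha3 hvS hva hvu
                          · intro c hc
                            rw [Set.mem_insert_iff, Set.mem_diff] at hc
                            rcases hc with h | ⟨h, -⟩
                            · right; right; exact h
                            · left; exact h
                          · intro h h1
                            rw [Set.mem_insert_iff, Set.mem_diff, Set.mem_singleton_iff] at h
                            rcases h with h | ⟨h, hne⟩
                            · exact ne01 h
                            · exact hne (inl.inj (hFWN (inl v0) ((hA1 v0).mpr ⟨h01.symm, h02⟩) h))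
                  · rcases hee e with rfl | rfl
                    · exfalso
                      exact hu2 (inl.inj (hvu (inl v2) ((hAxr v2).mpr (Or.inr rfl)) h2UV)).symm
                    · exact absurd hy hvS
            · have h1 : (insert v1 (UV \ {ℓ})).ncard = (UV \ {ℓ}).ncard + 1 :=
                Set.ncard_insert_of_notMem (fun h => hv1S h.1) (Set.toFinite _)
              have h2 : (UV \ {ℓ}).ncard + 1 = UV.ncard :=
                Set.ncard_diff_singleton_add_one hℓU (Set.toFinite _)
              have h3 := hcard1 (Or.inl hx)
              omega
          · refine ⟨UV, ?_, ?_⟩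
            · intro u huUV
              by_cases hu2 : u = v2
              · rw [hu2]
                exact hpairV3B _ (hu2 ▸ huUV) (fun c hc => Or.inl hc) hv3UV hZ4
              · obtain ⟨v, hvS, hvN⟩ := hU' (inl u) huUV
                obtain ⟨hva, -, hvu⟩ := hwit hvN
                rcases v with a | e
                · by_cases ha1 : a = v1
                  · exfalso
                    have h2 := (hA1 u).mp (ha1 ▸ hva)
                    exact hL ⟨u, h2.1, h2.2, huUV⟩
                  · by_cases ha2 : a = v2
                    · exfalso; exact hvS (by rw [ha2]; exact h2UV)
                    · by_cases ha3 : a = v3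
                      · exfalso
                        have h2 := hvyu (inl u) (ha3 ▸ hva) huUV
                        simp at h2
                      · refine hgen _ u huUV (fun c hc => Or.inl hc) ?_ a ha1 ha2 ha3 hvS hva hvu
                        intro h _
                        exact absurd ⟨v0, h01.symm, h02, h⟩ hL
                · rcases hee e with rfl | rfl
                  · exfalso
                    exact hu2 (inl.inj (hvu (inl v2) ((hAxr v2).mpr (Or.inr rfl)) h2UV)).symm
                  · exact absurd hy hvS
            · exact hcard1 (Or.inl hx)
        · by_cases h1UV : inl v1 ∈ U'
          · have hv0UV : inl v0 ∉ U' := fun h => (hFW v0 h01.symm h02 h).1 h1UV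
            have hLempty : ∀ ℓ, T.Adj v1 ℓ → ℓ ≠ v2 → inl ℓ ∉ U' :=
              fun ℓ ha hn hℓ => (hFW ℓ ha hn hℓ).1 h1UV
            refine ⟨insert v0 (UV \ {v1}), ?_, ?_⟩
            · intro u hu
              rw [Set.mem_insert_iff, Set.mem_diff, Set.mem_singleton_iff] at hu
              rcases hu with rfl | ⟨huUV, hu1⟩
              · refine hpair _ _ v1 (Set.mem_insert _ _) h01.symm ?_ ?_
                · intro h
                  rw [Set.mem_insert_iff, Set.mem_diff, Set.mem_singleton_iff] at h
                  rcases h with h | ⟨-, h⟩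
                  · exact ne01 h.symm
                  · exact h rfl
                · intro c hc hcU
                  rw [Set.mem_insert_iff, Set.mem_diff, Set.mem_singleton_iff] at hcU
                  rcases hcU with rfl | ⟨hcUV, hc1⟩
                  · rfl
                  · exfalso
                    by_cases hc2 : c = v2
                    · exact h2UV (hc2 ▸ hcUV)
                    · exact hLempty c hc hc2 hcUV
              · obtain ⟨v, hvS, hvN⟩ := hU' (inl u) huUV
                obtain ⟨hva, -, hvu⟩ := hwit hvN
                rcases v with a | e
                · by_cases ha1 : a = v1
                  · exfalso; exact hvS (by rw [ha1]; exact h1UV)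
                  · by_cases ha2 : a = v2
                    · refine hpairV2A _ u (Set.mem_insert_of_mem _ ⟨huUV, hu1⟩) ?_ ?_ ?_ (ha2 ▸ hvS) (ha2 ▸ hva) (ha2 ▸ hvu)
                      · intro c hc
                        rw [Set.mem_insert_iff, Set.mem_diff] at hc
                        rcases hc with h | ⟨h, -⟩
                        · right; exact h
                        · left; exact h
                      · intro h
                        rw [Set.mem_insert_iff, Set.mem_diff, Set.mem_singleton_iff] at h
                        rcases h with h | ⟨-, h⟩
                        · exact ne01 h.symm
                        · exact h rfl
                      · intro h
                        rw [Set.mem_insert_iff, Set.mem_diff] at h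
                        rcases h with h | ⟨h, -⟩
                        · exact h03 h.symm
                        · exact hv3UV h
                    · by_cases ha3 : a = v3
                      · exfalso
                        have h2 := hvyu (inl u) (ha3 ▸ hva) huUV
                        simp at h2
                      · refine hgen _ u (Set.mem_insert_of_mem _ ⟨huUV, hu1⟩) ?_ ?_ a ha1 ha2 ha3 hvS hva hvu
                        · intro c hc
                          rw [Set.mem_insert_iff, Set.mem_diff] at hc
                          rcases hc with h | ⟨h, -⟩
                          · right; left; exact h
                          · left; exact h
                        · intro h0 h1in
                          rw [Set.mem_insert_iff, Set.mem_diff, Set.mem_singleton_iff] at h1in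
                          rcases h1in with h | ⟨-, h⟩
                          · exact ne01 h.symm
                          · exact h rfl
                · rcases hee e with rfl | rfl
                  · exfalso
                    rcases (hAxr u).mp hva with h | h
                    · exact hu1 h
                    · exact h2UV (h ▸ huUV)
                  · exact absurd hy hvS
            · have h1 : (insert v0 (UV \ {v1})).ncard = (UV \ {v1}).ncard + 1 :=
                Set.ncard_insert_of_notMem (fun h => hv0UV h.1) (Set.toFinite _)
              have h2 : (UV \ {v1}).ncard + 1 = UV.ncard :=
                Set.ncard_diff_singleton_add_one h1UV (Set.toFinite _)
              have h3 := hcard1 (Or.inl hx)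
              omega
          · refine ⟨UV, ?_, ?_⟩
            · intro u huUV
              obtain ⟨v, hvS, hvN⟩ := hU' (inl u) huUV
              obtain ⟨hva, -, hvu⟩ := hwit hvN
              rcases v with a | e
              · by_cases ha1 : a = v1
                · exact hpairV1 _ u huUV (fun c hc => hc) (fun h => h2UV h) h1UV (ha1 ▸ hva) (ha1 ▸ hvu)
                · by_cases ha2 : a = v2
                  · exact hpairV2A _ u huUV (fun c hc => Or.inl hc) (fun h => h1UV h) (fun h => hv3UV h) (ha2 ▸ hvS) (ha2 ▸ hva) (ha2 ▸ hvu)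
                  · by_cases ha3 : a = v3
                    · exfalso
                      have h2 := hvyu (inl u) (ha3 ▸ hva) huUV
                      simp at h2
                    · exact hgen _ u huUV (fun c hc => Or.inl hc) (fun _ h => h1UV h) a ha1 ha2 ha3 hvS hva hvu
              · rcases hee e with rfl | rfl
                · exfalso
                  rcases (hAxr u).mp hva with h | h
                  · exact h1UV (h ▸ huUV)
                  · exact h2UV (h ▸ huUV)
                · exact absurd hy hvS
            · exact hcard1 (Or.inl hx)
    · -- CASE IV : x ∉ U', y ∉ U'
      by_cases h2UV : inl v2 ∈ U'
      · -- drop v2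
        refine ⟨UV \ {v2}, ?_, ?_⟩
        · intro u hu
          rw [Set.mem_diff, Set.mem_singleton_iff] at hu
          obtain ⟨huUV, hu2⟩ := hu
          obtain ⟨v, hvS, hvN⟩ := hU' (inl u) huUV
          obtain ⟨hva, -, hvu⟩ := hwit hvN
          rcases v with a | e
          · by_cases ha1 : a = v1
            · exact hpairV1 _ u ⟨huUV, hu2⟩ (fun c hc => hc.1) (fun h => h.2 rfl) (ha1 ▸ hvS) (ha1 ▸ hva) (ha1 ▸ hvu)
            · by_cases ha2 : a = v2
              · exfalso; exact hvS (by rw [ha2]; exact h2UV)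
              · by_cases ha3 : a = v3
                · exact hpairV3 _ u ⟨huUV, hu2⟩ (fun c hc => Or.inl hc.1) (fun h => h.2 rfl) (ha3 ▸ hvS) (ha3 ▸ hva) (ha3 ▸ hvu)
                · refine hgen _ u ⟨huUV, hu2⟩ (fun c hc => Or.inl hc.1) ?_ a ha1 ha2 ha3 hvS hva hvu
                  intro h h1
                  exact (hFW v0 h01.symm h02 h.1).1 h1.1
          · rcases hee e with rfl | rfl
            · rcases (hAxr u).mp hva with h | h
              · rw [h]
                refine hpairV0 _ ⟨h ▸ huUV, fun hh => ne12 hh⟩ ?_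
                intro hh
                exact (hFW v0 h01.symm h02 hh.1).1 (h ▸ huUV)
              · exact absurd h hu2
            · exfalso
              exact hu2 (inl.inj (hvu (inl v2) ((hAyr v2).mpr (Or.inl rfl)) h2UV)).symm
        · have h2 := hUVcard v2
          have h3 := hcard0 hx hy
          omega
      · by_cases h1UV : inl v1 ∈ U'
        · -- swap v1 → v0, drop v3
          have hv0UV : inl v0 ∉ U' := fun h => (hFW v0 h01.symm h02 h).1 h1UV
          have hLempty : ∀ ℓ, T.Adj v1 ℓ → ℓ ≠ v2 → inl ℓ ∉ U' :=
            fun ℓ ha hn hℓ => (hFW ℓ ha hn hℓ).1 h1UV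
          refine ⟨insert v0 ((UV \ {v1}) \ {v3}), ?_, ?_⟩
          · intro u hu
            rw [Set.mem_insert_iff, Set.mem_diff, Set.mem_diff, Set.mem_singleton_iff,
              Set.mem_singleton_iff] at hu
            rcases hu with rfl | ⟨⟨huUV, hu1⟩, hu3⟩
            · refine hpair _ _ v1 (Set.mem_insert _ _) h01.symm ?_ ?_
              · intro h
                rw [Set.mem_insert_iff, Set.mem_diff, Set.mem_diff, Set.mem_singleton_iff,
                  Set.mem_singleton_iff] at h
                rcases h with h | ⟨⟨-, h⟩, -⟩
                · exact ne01 h.symm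
                · exact h rfl
              · intro c hc hcU
                rw [Set.mem_insert_iff, Set.mem_diff, Set.mem_diff, Set.mem_singleton_iff,
                  Set.mem_singleton_iff] at hcU
                rcases hcU with rfl | ⟨⟨hcUV, hc1⟩, hc3⟩
                · rfl
                · exfalso
                  by_cases hc2 : c = v2
                  · exact h2UV (hc2 ▸ hcUV)
                  · exact hLempty c hc hc2 hcUV
            · obtain ⟨v, hvS, hvN⟩ := hU' (inl u) huUV
              obtain ⟨hva, -, hvu⟩ := hwit hvN
              rcases v with a | e
              · by_cases ha1 : a = v1
                · exfalso; exact hvS (by rw [ha1]; exact h1UV)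
                · by_cases ha2 : a = v2
                  · refine hpairV2A _ u (Set.mem_insert_of_mem _ ⟨⟨huUV, hu1⟩, hu3⟩) ?_ ?_ ?_ (ha2 ▸ hvS) (ha2 ▸ hva) (ha2 ▸ hvu)
                    · intro c hc
                      rw [Set.mem_insert_iff, Set.mem_diff, Set.mem_diff] at hc
                      rcases hc with h | ⟨⟨h, -⟩, -⟩
                      · right; exact h
                      · left; exact h
                    · intro h
                      rw [Set.mem_insert_iff, Set.mem_diff, Set.mem_diff, Set.mem_singleton_iff,
                        Set.mem_singleton_iff] at h
                      rcases h with h | ⟨⟨-, h⟩, -⟩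
                      · exact ne01 h.symm
                      · exact h rfl
                    · intro h
                      rw [Set.mem_insert_iff, Set.mem_diff, Set.mem_diff, Set.mem_singleton_iff,
                        Set.mem_singleton_iff] at h
                      rcases h with h | ⟨⟨-, -⟩, h⟩
                      · exact h03 h.symm
                      · exact h rfl
                  · by_cases ha3 : a = v3
                    · refine hpairV3 _ u (Set.mem_insert_of_mem _ ⟨⟨huUV, hu1⟩, hu3⟩) ?_ ?_ (ha3 ▸ hvS) (ha3 ▸ hva) (ha3 ▸ hvu)
                      · intro c hc
                        rw [Set.mem_insert_iff, Set.mem_diff, Set.mem_diff] at hc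
                        rcases hc with h | ⟨⟨h, -⟩, -⟩
                        · right; left; exact h
                        · left; exact h
                      · intro h
                        rw [Set.mem_insert_iff, Set.mem_diff, Set.mem_diff] at h
                        rcases h with h | ⟨⟨h, -⟩, -⟩
                        · exact h02 h.symm
                        · exact h2UV h
                    · refine hgen _ u (Set.mem_insert_of_mem _ ⟨⟨huUV, hu1⟩, hu3⟩) ?_ ?_ a ha1 ha2 ha3 hvS hva hvu
                      · intro c hc
                        rw [Set.mem_insert_iff, Set.mem_diff, Set.mem_diff] at hc
                        rcases hc with h | ⟨⟨h, -⟩, -⟩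
                        · right; left; exact h
                        · left; exact h
                      · intro h0 h1in
                        rw [Set.mem_insert_iff, Set.mem_diff, Set.mem_diff, Set.mem_singleton_iff,
                          Set.mem_singleton_iff] at h1in
                        rcases h1in with h | ⟨⟨-, h⟩, -⟩
                        · exact ne01 h.symm
                        · exact h rfl
              · rcases hee e with rfl | rfl
                · exfalso
                  rcases (hAxr u).mp hva with h | h
                  · exact hu1 h
                  · exact h2UV (h ▸ huUV)
                · exfalso
                  rcases (hAyr u).mp hva with h | h
                  · exact h2UV (h ▸ huUV)
                  · exact hu3 h
          · have h1 : (insert v0 ((UV \ {v1}) \ {v3})).ncard = ((UV \ {v1}) \ {v3}).ncard + 1 :=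
              Set.ncard_insert_of_notMem (fun h => hv0UV h.1.1) (Set.toFinite _)
            have h2 : (UV \ {v1}).ncard + 1 = UV.ncard :=
              Set.ncard_diff_singleton_add_one h1UV (Set.toFinite _)
            have h4 : (UV \ {v1}).ncard ≤ ((UV \ {v1}) \ {v3}).ncard + 1 := by
              by_cases h : v3 ∈ UV \ {v1}
              · rw [Set.ncard_diff_singleton_add_one h (Set.toFinite _)]
              · rw [Set.diff_singleton_eq_self h]
                exact Nat.le_succ _
            have h3 := hcard0 hx hy
            omega
        · -- drop v3
          refine ⟨UV \ {v3}, ?_, ?_⟩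
          · intro u hu
            rw [Set.mem_diff, Set.mem_singleton_iff] at hu
            obtain ⟨huUV, hu3⟩ := hu
            obtain ⟨v, hvS, hvN⟩ := hU' (inl u) huUV
            obtain ⟨hva, -, hvu⟩ := hwit hvN
            rcases v with a | e
            · by_cases ha1 : a = v1
              · exact hpairV1 _ u ⟨huUV, hu3⟩ (fun c hc => hc.1) (fun h => h2UV h.1) (ha1 ▸ hvS) (ha1 ▸ hva) (ha1 ▸ hvu)
              · by_cases ha2 : a = v2
                · exact hpairV2A _ u ⟨huUV, hu3⟩ (fun c hc => Or.inl hc.1) (fun h => h1UV h.1) (fun h => h.2 rfl) (ha2 ▸ hvS) (ha2 ▸ hva) (ha2 ▸ hvu)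
                · by_cases ha3 : a = v3
                  · exact hpairV3 _ u ⟨huUV, hu3⟩ (fun c hc => Or.inl hc.1) (fun h => h2UV h.1) (ha3 ▸ hvS) (ha3 ▸ hva) (ha3 ▸ hvu)
                  · exact hgen _ u ⟨huUV, hu3⟩ (fun c hc => Or.inl hc.1) (fun _ h => h1UV h.1) a ha1 ha2 ha3 hvS hva hvu
            · rcases hee e with rfl | rfl
              · exfalso
                rcases (hAxr u).mp hva with h | h
                · exact h1UV (h ▸ huUV)
                · exact h2UV (h ▸ huUV)
              · exfalso
                rcases (hAyr u).mp hva with h | h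
                · exact h2UV (h ▸ huUV)
                · exact hu3 h
          · have h2 := hUVcard v3
            have h3 := hcard0 hx hy
            omega

/-- If `T` is a tree of diameter at least 4 and `P = u₁u₂…` is a longest path, then
subdividing the edges `u₂u₃` and `u₃u₄` increases `γ_sp` by at least one. -/
theorem superDomNum_subdivide_longest_path {V : Type} [Fintype V] (T : SimpleGraph V)
    (hT : T.IsTree) {a b : V} (p : T.Walk a b) (hp : p.IsPath)
    (hlong : ∀ {c d : V} (q : T.Walk c d), q.IsPath → q.length ≤ p.length)
    (hdiam : 4 ≤ p.length) :
    superDomNum T + 1 ≤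
      superDomNum (subdivide T
        {s(p.getVert 1, p.getVert 2), s(p.getVert 2, p.getVert 3)}) := by
  classical
  obtain ⟨h02, h03, h13, hN1⟩ := longest_path_facts hT p hp (fun q hq => hlong q hq) hdiam
  have h01 : T.Adj (p.getVert 0) (p.getVert 1) := p.adj_getVert_succ (by omega)
  have h12 : T.Adj (p.getVert 1) (p.getVert 2) := p.adj_getVert_succ (by omega)
  have h23 : T.Adj (p.getVert 2) (p.getVert 3) := p.adj_getVert_succ (by omega)
  have hene : s(p.getVert 1, p.getVert 2) ≠ s(p.getVert 2, p.getVert 3) := by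
    intro h
    rw [Sym2.eq_iff] at h
    rcases h with ⟨hh, -⟩ | ⟨hh, -⟩
    · exact h12.ne hh
    · exact h13 hh
  apply le_csInf
  · refine ⟨(Set.univ : Set (V ⊕ ↥({s(p.getVert 1, p.getVert 2), s(p.getVert 2, p.getVert 3)} : Set (Sym2 V)))).ncard, Set.univ, ?_, rfl⟩
    intro u hu
    simp at hu
  · rintro n ⟨S', hS', rfl⟩
    have hGood : ∀ u ∈ S'ᶜ, ∃ v ∉ S'ᶜ,
        (subdivide T {s(p.getVert 1, p.getVert 2), s(p.getVert 2, p.getVert 3)}).neighborSet v ∩ S'ᶜ = {u} := by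
      intro u hu
      obtain ⟨v, hv, hvN⟩ := hS' u hu
      exact ⟨v, fun hh => hh hv, hvN⟩
    obtain ⟨U, hU, hcard⟩ := core T {s(p.getVert 1, p.getVert 2), s(p.getVert 2, p.getVert 3)}
      (p.getVert 0) (p.getVert 1) (p.getVert 2) (p.getVert 3)
      ⟨s(p.getVert 1, p.getVert 2), Set.mem_insert _ _⟩
      ⟨s(p.getVert 2, p.getVert 3), Set.mem_insert_of_mem _ rfl⟩
      rfl rfl (fun e => by simp [Set.mem_insert_iff])
      h01 h12 h23 h02 h03 h13 hN1 (tri_free hT) (two_path_unique hT) S'ᶜ hGood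
    have hSD : SuperDomSet T Uᶜ := by
      intro u hu
      rw [compl_compl] at hu
      obtain ⟨v, hv, hvN⟩ := hU u hu
      refine ⟨v, hv, ?_⟩
      rw [compl_compl]
      exact hvN
    have h1 : superDomNum T ≤ Uᶜ.ncard := Nat.sInf_le ⟨Uᶜ, hSD, rfl⟩
    have e1 : U.ncard + Uᶜ.ncard = Nat.card V := Set.ncard_add_ncard_compl U
    have e2 : S'ᶜ.ncard + S'ᶜᶜ.ncard =
        Nat.card (V ⊕ ↥({s(p.getVert 1, p.getVert 2), s(p.getVert 2, p.getVert 3)} : Set (Sym2 V))) :=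
      Set.ncard_add_ncard_compl _
    rw [compl_compl] at e2
    haveI : Finite ↥({s(p.getVert 1, p.getVert 2), s(p.getVert 2, p.getVert 3)} : Set (Sym2 V)) :=
      Set.Finite.to_subtype ((Set.finite_singleton _).insert _)
    have e3 : Nat.card (V ⊕ ↥({s(p.getVert 1, p.getVert 2), s(p.getVert 2, p.getVert 3)} : Set (Sym2 V)))
        = Nat.card V + 2 := by
      rw [Nat.card_sum]
      congr 1
      rw [Nat.card_coe_set_eq]
      exact Set.ncard_pair hene
    omega
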